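/- Fix d ≥ 1, a nonzero vector μ ∈ ℝ^d, σ > 0, p ∈ (1/2, 1), and t > 2; set q = 1 − 1/t. Let D_p be the distribution on ℝ^d × {−1,+1} where Y is uniform on {−1,+1}, X given Y=+1 is N(μ, σ²I), and X given Y=−1 is the mixture p·N(−μ, σ²I) + (1−p)·N(3μ, σ²I). Let h^MDA_q be the classifier that outputs +1 iff f(x; μ, σ²I) ≥ q·f(x; −μ, σ²I) and f(x; μ, σ²I) ≥ (1−q)·f(x; 3μ, σ²I), where f(·; m, σ²I) is the N(m, σ²I) density (the ideal MDA classifier built with mixture weight q instead of p). Then, with ν = ‖μ‖/σ, 2·Pr_{(X,Y)∼D_p}[h^MDA_q(X) ≠ Y] ≤ Φ(−ν + ln(1−1/t)/(2ν)) + Φ(−ν − ln t/(2ν)) + p·Φ(−ν − ln(1−1/t)/(2ν)) + (1−p)·Φ(−ν + ln t/(2ν)). -/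

import Mathlib

open MeasureTheory Real Set ProbabilityTheory
open scoped ENNReal RealInnerProductSpace

/-- The standard normal cumulative distribution function
`Φ(z) = ∫_{−∞}^z (1/√(2π)) e^{−u²/2} du`. -/
noncomputable def stdNormCDF (z : ℝ) : ℝ :=
  ∫ u in Set.Iic z, (1 / Real.sqrt (2 * Real.pi)) * Real.exp (-u ^ 2 / 2)
/-- Density of the `d`-dimensional Gaussian `N(m, σ²I)`:
`f(x; m, σ²I) = (2πσ²)^{−d/2} exp(−‖x−m‖²/(2σ²))`. -/
noncomputable def gaussPdf (d : ℕ) (m : EuclideanSpace ℝ (Fin d)) (σ : ℝ)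
    (x : EuclideanSpace ℝ (Fin d)) : ℝ :=
  (2 * Real.pi * σ ^ 2) ^ (-(d : ℝ) / 2) * Real.exp (-‖x - m‖ ^ 2 / (2 * σ ^ 2))

/-- The `d`-dimensional Gaussian measure `N(m, σ²I)` on `ℝ^d`. -/
noncomputable def gauss (d : ℕ) (m : EuclideanSpace ℝ (Fin d)) (σ : ℝ) :
    Measure (EuclideanSpace ℝ (Fin d)) :=
  volume.withDensity fun x => ENNReal.ofReal (gaussPdf d m σ x)
/-- The data-generating distribution `D` on `ℝ^d × {−1,+1}` (labels embedded in `ℝ`):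
`Y` is uniform on `{−1,+1}`, `X | Y=+1 ∼ N(μ, σ²I)`, and
`X | Y=−1 ∼ p·N(−μ, σ²I) + (1−p)·N(3μ, σ²I)`. -/
noncomputable def Dmix (d : ℕ) (μv : EuclideanSpace ℝ (Fin d)) (σ p : ℝ) :
    Measure (EuclideanSpace ℝ (Fin d) × ℝ) :=
  ENNReal.ofReal (1 / 2) • (gauss d μv σ).map (fun x => (x, (1 : ℝ)))
    + ENNReal.ofReal (p / 2) • (gauss d (-μv) σ).map (fun x => (x, (-1 : ℝ)))
    + ENNReal.ofReal ((1 - p) / 2) • (gauss d ((3 : ℝ) • μv) σ).map (fun x => (x, (-1 : ℝ)))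
/-- The MDA classifier: outputs `+1` iff `f(x; μ, σ²I) ≥ p·f(x; −μ, σ²I)` and
`f(x; μ, σ²I) ≥ (1−p)·f(x; 3μ, σ²I)`. -/
noncomputable def hMDA (d : ℕ) (μv : EuclideanSpace ℝ (Fin d)) (σ p : ℝ)
    (x : EuclideanSpace ℝ (Fin d)) : ℝ :=
  if p * gaussPdf d (-μv) σ x ≤ gaussPdf d μv σ x ∧
      (1 - p) * gaussPdf d ((3 : ℝ) • μv) σ x ≤ gaussPdf d μv σ x then 1 else -1

noncomputable def phi1 (a σ x : ℝ) : ℝ :=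
  (2 * Real.pi * σ ^ 2) ^ (-(1:ℝ) / 2) * Real.exp (-(x - a) ^ 2 / (2 * σ ^ 2))

lemma rpow_neg_half_eq {B : ℝ} (hB : 0 < B) : B ^ (-(1:ℝ)/2) = 1 / Real.sqrt B := by
  have : (-(1:ℝ)/2) = -(1/2) := by norm_num
  rw [this, Real.rpow_neg hB.le, Real.sqrt_eq_rpow, one_div, one_div]

lemma sqrt_two_pi_sq {σ : ℝ} (hσ : 0 < σ) :
    Real.sqrt (2 * Real.pi * σ ^ 2) = Real.sqrt (2 * Real.pi) * σ := by
  rw [Real.sqrt_mul (by positivity), Real.sqrt_sq hσ.le]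

lemma integrable_phi1 (a : ℝ) {σ : ℝ} (hσ : 0 < σ) : Integrable (phi1 a σ) := by
  have hb : (0:ℝ) < 1 / (2 * σ ^ 2) := by positivity
  have h := ((integrable_exp_neg_mul_sq hb).comp_sub_right a).const_mul
    ((2 * Real.pi * σ ^ 2) ^ (-(1:ℝ) / 2))
  refine h.congr (Filter.Eventually.of_forall fun x => ?_)
  unfold phi1
  ring_nf

lemma integral_phi1 (a : ℝ) {σ : ℝ} (hσ : 0 < σ) : ∫ x, phi1 a σ x = 1 := by
  unfold phi1
  rw [MeasureTheory.integral_const_mul]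
  have h1 : ∫ x, Real.exp (-(x - a) ^ 2 / (2 * σ ^ 2)) =
      ∫ x, Real.exp (-(1 / (2 * σ ^ 2)) * x ^ 2) := by
    rw [← integral_sub_right_eq_self (fun x => Real.exp (-(1 / (2 * σ ^ 2)) * x ^ 2)) a]
    congr 1; ext x; ring_nf
  rw [h1, integral_gaussian, rpow_neg_half_eq (by positivity)]
  rw [one_div_mul_eq_div, div_eq_one_iff_eq (by positivity)]
  rw [eq_comm, show Real.pi / (1 / (2 * σ ^ 2)) = 2 * Real.pi * σ ^ 2 by field_simp]

lemma map_affine_volume {σ a : ℝ} (hσ : 0 < σ) :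
    (volume : Measure ℝ) = ENNReal.ofReal σ • Measure.map (fun u => σ * u + a) volume := by
  have h1 : Measure.map (fun u : ℝ => σ * u + a) volume
      = Measure.map (fun x : ℝ => x + a) (Measure.map (fun u : ℝ => σ * u) volume) := by
    rw [Measure.map_map (by fun_prop) (by fun_prop)]
    rfl
  rw [h1, Real.map_volume_mul_left hσ.ne', Measure.map_smul,
    map_add_right_eq_self volume a, smul_smul, ← ENNReal.ofReal_mul hσ.le,
    abs_of_pos (inv_pos.2 hσ), mul_inv_cancel₀ hσ.ne', ENNReal.ofReal_one, one_smul]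

lemma setIntegral_phi1_Iic (a c : ℝ) {σ : ℝ} (hσ : 0 < σ) :
    ∫ x in Set.Iic c, phi1 a σ x = stdNormCDF ((c - a) / σ) := by
  have hemb : MeasurableEmbedding (fun u : ℝ => σ * u + a) :=
    (affineHomeomorph σ a hσ.ne').measurableEmbedding
  rw [map_affine_volume (a := a) hσ, Measure.restrict_smul, integral_smul_measure,
    hemb.setIntegral_map]
  have hpre : (fun u : ℝ => σ * u + a) ⁻¹' Set.Iic c = Set.Iic ((c - a) / σ) := by
    ext u
    simp only [Set.mem_preimage, Set.mem_Iic]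
    rw [le_div_iff₀ hσ]
    constructor <;> intro h <;> nlinarith
  have hval : ∀ u : ℝ, phi1 a σ (σ * u + a)
      = (2 * Real.pi * σ ^ 2) ^ (-(1:ℝ)/2) * Real.exp (-u ^ 2 / 2) := by
    intro u
    unfold phi1
    congr 1
    have : (σ * u + a - a) ^ 2 = σ ^ 2 * u ^ 2 := by ring
    rw [this]
    congr 1
    field_simp
  simp only [hval, hpre]
  rw [MeasureTheory.integral_const_mul, ENNReal.toReal_ofReal hσ.le, stdNormCDF,
    MeasureTheory.integral_const_mul]
  rw [smul_eq_mul, ← mul_assoc]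
  congr 1
  rw [rpow_neg_half_eq (by positivity), sqrt_two_pi_sq hσ]
  field_simp


section Ddim
variable {d : ℕ}

lemma gaussPdf_repr (b : OrthonormalBasis (Fin d) ℝ (EuclideanSpace ℝ (Fin d)))
    (m : EuclideanSpace ℝ (Fin d)) {σ : ℝ} (hσ : 0 < σ) (y : EuclideanSpace ℝ (Fin d)) :
    gaussPdf d m σ (b.repr.symm y) = ∏ i, phi1 (b.repr m i) σ (y i) := by
  have hnorm : ‖b.repr.symm y - m‖ ^ 2 = ∑ i, (y i - b.repr m i) ^ 2 := by
    have h1 : b.repr.symm y - m = b.repr.symm (y - b.repr m) := by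
      rw [map_sub, b.repr.symm_apply_apply]
    rw [h1, b.repr.symm.norm_map, EuclideanSpace.norm_eq, Real.sq_sqrt (by positivity)]
    simp [Real.norm_eq_abs, sq_abs]
  unfold gaussPdf phi1
  rw [Finset.prod_mul_distrib, Finset.prod_const, ← Real.exp_sum, hnorm]
  congr 1
  · rw [Finset.card_univ, Fintype.card_fin,
      ← Real.rpow_natCast ((2 * Real.pi * σ ^ 2) ^ (-(1:ℝ)/2)) d,
      ← Real.rpow_mul (by positivity)]
    congr 1
    ring
  · congr 1
    simp [neg_div, Finset.sum_div, Finset.sum_neg_distrib]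

lemma measurePreserving_T (b : OrthonormalBasis (Fin d) ℝ (EuclideanSpace ℝ (Fin d))) :
    MeasurePreserving
      (fun y : Fin d → ℝ => b.repr.symm ((MeasurableEquiv.toLp 2 (Fin d → ℝ)) y))
      volume volume :=
  b.measurePreserving_repr_symm.comp
    (EuclideanSpace.volume_preserving_symm_measurableEquiv_toLp (Fin d)).symm

noncomputable def Teq (b : OrthonormalBasis (Fin d) ℝ (EuclideanSpace ℝ (Fin d))) :
    (Fin d → ℝ) ≃ᵐ EuclideanSpace ℝ (Fin d) :=
  (MeasurableEquiv.toLp 2 (Fin d → ℝ)).trans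
    b.repr.symm.toHomeomorph.toMeasurableEquiv

lemma integral_transport (b : OrthonormalBasis (Fin d) ℝ (EuclideanSpace ℝ (Fin d)))
    (f : EuclideanSpace ℝ (Fin d) → ℝ) :
    ∫ x, f x = ∫ y : Fin d → ℝ,
      f (b.repr.symm ((MeasurableEquiv.toLp 2 (Fin d → ℝ)) y)) := by
  have h : MeasurePreserving (Teq b) volume volume := measurePreserving_T b
  exact (h.integral_comp' f).symm

lemma integrable_transport (b : OrthonormalBasis (Fin d) ℝ (EuclideanSpace ℝ (Fin d)))
    (f : EuclideanSpace ℝ (Fin d) → ℝ)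
    (hf : Integrable (fun y : Fin d → ℝ =>
      f (b.repr.symm ((MeasurableEquiv.toLp 2 (Fin d → ℝ)) y)))) :
    Integrable f := by
  have h : MeasurePreserving (Teq b) volume volume := measurePreserving_T b
  exact (h.integrable_comp_emb (Teq b).measurableEmbedding).mp hf

lemma integrable_gaussPdf (m : EuclideanSpace ℝ (Fin d)) {σ : ℝ} (hσ : 0 < σ) :
    Integrable (gaussPdf d m σ) := by
  obtain ⟨b⟩ : Nonempty (OrthonormalBasis (Fin d) ℝ (EuclideanSpace ℝ (Fin d))) :=
    ⟨EuclideanSpace.basisFun (Fin d) ℝ⟩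
  refine integrable_transport b _ ?_
  have : (fun y : Fin d → ℝ =>
      gaussPdf d m σ (b.repr.symm ((MeasurableEquiv.toLp 2 (Fin d → ℝ)) y)))
      = fun y => ∏ i, phi1 (b.repr m i) σ (y i) := by
    funext y
    exact gaussPdf_repr b m hσ _
  rw [this]
  exact Integrable.fintype_prod (fun i => integrable_phi1 _ hσ)

lemma integral_gaussPdf (m : EuclideanSpace ℝ (Fin d)) {σ : ℝ} (hσ : 0 < σ) :
    ∫ x, gaussPdf d m σ x = 1 := by
  obtain ⟨b⟩ : Nonempty (OrthonormalBasis (Fin d) ℝ (EuclideanSpace ℝ (Fin d))) :=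
    ⟨EuclideanSpace.basisFun (Fin d) ℝ⟩
  rw [integral_transport b]
  have : (fun y : Fin d → ℝ =>
      gaussPdf d m σ (b.repr.symm ((MeasurableEquiv.toLp 2 (Fin d → ℝ)) y)))
      = fun y => ∏ i, phi1 (b.repr m i) σ (y i) := by
    funext y
    exact gaussPdf_repr b m hσ _
  rw [this, MeasureTheory.integral_fintype_prod_volume_eq_prod (𝕜 := ℝ)
    (fun i => phi1 (b.repr m i) σ)]
  simp [integral_phi1 _ hσ]

lemma exists_onb_first (hd : 0 < d) {w : EuclideanSpace ℝ (Fin d)} (hw : w ≠ 0) :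
    ∃ b : OrthonormalBasis (Fin d) ℝ (EuclideanSpace ℝ (Fin d)),
      b ⟨0, hd⟩ = ‖w‖⁻¹ • w := by
  set u : EuclideanSpace ℝ (Fin d) := ‖w‖⁻¹ • w with hu
  have hnw : (0:ℝ) < ‖w‖ := norm_pos_iff.mpr hw
  have hun : ‖u‖ = 1 := by
    rw [hu, norm_smul, norm_inv, norm_norm, inv_mul_cancel₀ hnw.ne']
  have hcard : Module.finrank ℝ (EuclideanSpace ℝ (Fin d)) = Fintype.card (Fin d) := by
    simp [finrank_euclideanSpace]
  have horth : Orthonormal ℝ (Set.restrict {(⟨0, hd⟩ : Fin d)} (fun _ => u)) := by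
    constructor
    · intro i; exact hun
    · intro i j hij
      exfalso
      apply hij
      ext
      have hi := i.2
      have hj := j.2
      simp only [Set.mem_singleton_iff] at hi hj
      rw [hi, hj]
  obtain ⟨b, hb⟩ := horth.exists_orthonormalBasis_extension_of_card_eq hcard
  exact ⟨b, hb _ rfl⟩

lemma setIntegral_gaussPdf_halfspace (hd : 0 < d) (m : EuclideanSpace ℝ (Fin d)) {σ : ℝ}
    (hσ : 0 < σ) {w : EuclideanSpace ℝ (Fin d)} (hw : w ≠ 0) (c : ℝ) :
    ∫ x in {x : EuclideanSpace ℝ (Fin d) | ⟪x, w⟫ ≤ c}, gaussPdf d m σ x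
      = stdNormCDF ((c - ⟪m, w⟫) / (σ * ‖w‖)) := by
  obtain ⟨b, hb⟩ := exists_onb_first hd hw
  set i0 : Fin d := ⟨0, hd⟩
  have hnw : (0:ℝ) < ‖w‖ := norm_pos_iff.mpr hw
  have hmeas : MeasurableSet {x : EuclideanSpace ℝ (Fin d) | ⟪x, w⟫ ≤ c} :=
    measurableSet_le ((continuous_id.inner continuous_const).measurable) measurable_const
  classical
  let g : Fin d → ℝ → ℝ := fun i x =>
    if i = i0 then Set.indicator (Set.Iic (c / ‖w‖)) (phi1 (b.repr m i) σ) x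
    else phi1 (b.repr m i) σ x
  rw [← MeasureTheory.integral_indicator hmeas, integral_transport b]
  have hinner : ∀ y : Fin d → ℝ,
      ⟪b.repr.symm ((MeasurableEquiv.toLp 2 (Fin d → ℝ)) y), w⟫
        = ‖w‖ * y i0 := by
    intro y
    set x := b.repr.symm ((MeasurableEquiv.toLp 2 (Fin d → ℝ)) y) with hx
    have hwu : w = ‖w‖ • (‖w‖⁻¹ • w) := by
      rw [smul_smul, mul_inv_cancel₀ hnw.ne', one_smul]
    calc ⟪x, w⟫ = ‖w‖ * ⟪x, ‖w‖⁻¹ • w⟫ := by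
          rw [← real_inner_smul_right]
          conv_lhs => rw [hwu]
      _ = ‖w‖ * ⟪b i0, x⟫ := by rw [hb, real_inner_comm]
      _ = ‖w‖ * (b.repr x i0) := by rw [b.repr_apply_apply]
      _ = ‖w‖ * y i0 := by
          rw [hx, b.repr.apply_symm_apply]
          rfl
  have hpt : ∀ y : Fin d → ℝ,
      Set.indicator {x : EuclideanSpace ℝ (Fin d) | ⟪x, w⟫ ≤ c} (gaussPdf d m σ)
        (b.repr.symm ((MeasurableEquiv.toLp 2 (Fin d → ℝ)) y))
        = ∏ i, g i (y i) := by
    intro y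
    have hmem : (b.repr.symm ((MeasurableEquiv.toLp 2 (Fin d → ℝ)) y)
        ∈ {x : EuclideanSpace ℝ (Fin d) | ⟪x, w⟫ ≤ c}) ↔ y i0 ≤ c / ‖w‖ := by
      simp only [Set.mem_setOf_eq, hinner y]
      rw [mul_comm, ← le_div_iff₀ hnw]
    by_cases hy : y i0 ≤ c / ‖w‖
    · rw [Set.indicator_of_mem (hmem.mpr hy), gaussPdf_repr b m hσ]
      refine Finset.prod_congr rfl fun i _ => ?_
      show phi1 (b.repr m i) σ (y i) = g i (y i)
      by_cases hi : i = i0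
      · rw [show g i (y i)
            = Set.indicator (Set.Iic (c / ‖w‖)) (phi1 (b.repr m i) σ) (y i) from if_pos hi,
          Set.indicator_of_mem (Set.mem_Iic.mpr (by rw [hi]; exact hy))]
      · exact (if_neg hi).symm
    · rw [Set.indicator_of_notMem (fun hmem' => hy (hmem.mp hmem'))]
      refine (Finset.prod_eq_zero (Finset.mem_univ i0) ?_).symm
      show (if i0 = i0 then Set.indicator (Set.Iic (c / ‖w‖)) (phi1 (b.repr m i0) σ) (y i0)
          else phi1 (b.repr m i0) σ (y i0)) = 0
      rw [if_pos rfl, Set.indicator_of_notMem (fun h => hy (Set.mem_Iic.mp h))]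
  have hgy : (fun y : Fin d → ℝ =>
      Set.indicator {x : EuclideanSpace ℝ (Fin d) | ⟪x, w⟫ ≤ c} (gaussPdf d m σ)
        (b.repr.symm ((MeasurableEquiv.toLp 2 (Fin d → ℝ)) y)))
      = fun y => ∏ i, g i (y i) := funext hpt
  rw [hgy, MeasureTheory.integral_fintype_prod_volume_eq_prod (𝕜 := ℝ) g]
  have hprod : ∀ i, i ≠ i0 → (∫ x, g i x) = 1 := by
    intro i hi
    have : g i = phi1 (b.repr m i) σ := by
      funext x
      exact if_neg hi
    rw [this]
    exact integral_phi1 _ hσ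
  rw [Finset.prod_eq_single i0 (fun i _ hi => hprod i hi) (fun h => absurd (Finset.mem_univ i0) h)]
  have : g i0 = Set.indicator (Set.Iic (c / ‖w‖)) (phi1 (b.repr m i0) σ) := by
    funext x
    exact if_pos rfl
  rw [this, MeasureTheory.integral_indicator measurableSet_Iic, setIntegral_phi1_Iic _ _ hσ]
  congr 1
  have hbm : b.repr m i0 = ⟪m, w⟫ / ‖w‖ := by
    rw [b.repr_apply_apply, hb, real_inner_smul_left, real_inner_comm]
    field_simp
  rw [hbm, div_sub_div_same, div_div, mul_comm]

lemma gaussPdf_nonneg (m : EuclideanSpace ℝ (Fin d)) (σ : ℝ) (x : EuclideanSpace ℝ (Fin d)) :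
    0 ≤ gaussPdf d m σ x := by
  unfold gaussPdf; positivity

lemma gauss_apply (m : EuclideanSpace ℝ (Fin d)) {σ : ℝ} (hσ : 0 < σ)
    {S : Set (EuclideanSpace ℝ (Fin d))} (hS : MeasurableSet S) :
    gauss d m σ S = ENNReal.ofReal (∫ x in S, gaussPdf d m σ x) := by
  rw [gauss, withDensity_apply _ hS,
    ← MeasureTheory.ofReal_integral_eq_lintegral_ofReal
      ((integrable_gaussPdf m hσ).integrableOn)
      (Filter.Eventually.of_forall fun x => gaussPdf_nonneg m σ x)]

lemma gauss_halfspace_le (hd : 0 < d) (m : EuclideanSpace ℝ (Fin d)) {σ : ℝ}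
    (hσ : 0 < σ) {w : EuclideanSpace ℝ (Fin d)} (hw : w ≠ 0) (c : ℝ) :
    gauss d m σ {x : EuclideanSpace ℝ (Fin d) | ⟪x, w⟫ ≤ c}
      = ENNReal.ofReal (stdNormCDF ((c - ⟪m, w⟫) / (σ * ‖w‖))) := by
  have hmeas : MeasurableSet {x : EuclideanSpace ℝ (Fin d) | ⟪x, w⟫ ≤ c} :=
    measurableSet_le ((continuous_id.inner continuous_const).measurable) measurable_const
  rw [gauss_apply m hσ hmeas, setIntegral_gaussPdf_halfspace hd m hσ hw c]

lemma gauss_halfspace_ge (hd : 0 < d) (m : EuclideanSpace ℝ (Fin d)) {σ : ℝ}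
    (hσ : 0 < σ) {w : EuclideanSpace ℝ (Fin d)} (hw : w ≠ 0) (c : ℝ) :
    gauss d m σ {x : EuclideanSpace ℝ (Fin d) | c ≤ ⟪x, w⟫}
      = ENNReal.ofReal (stdNormCDF ((⟪m, w⟫ - c) / (σ * ‖w‖))) := by
  have hset : {x : EuclideanSpace ℝ (Fin d) | c ≤ ⟪x, w⟫}
      = {x : EuclideanSpace ℝ (Fin d) | ⟪x, -w⟫ ≤ -c} := by
    ext x
    simp only [Set.mem_setOf_eq, inner_neg_right]
    constructor <;> intro h <;> linarith
  rw [hset, gauss_halfspace_le hd m hσ (neg_ne_zero.mpr hw) (-c)]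
  congr 2
  rw [inner_neg_right, norm_neg]
  ring

lemma stdNormCDF_nonneg (z : ℝ) : 0 ≤ stdNormCDF z :=
  MeasureTheory.setIntegral_nonneg measurableSet_Iic (fun x _ => by positivity)

lemma gaussPdf_le_iff {σ : ℝ} (hσ : 0 < σ) {a : ℝ} (ha : 0 < a)
    (m₁ m₂ x : EuclideanSpace ℝ (Fin d)) :
    a * gaussPdf d m₁ σ x ≤ gaussPdf d m₂ σ x ↔
      Real.log a + -‖x - m₁‖ ^ 2 / (2 * σ ^ 2) ≤ -‖x - m₂‖ ^ 2 / (2 * σ ^ 2) := by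
  unfold gaussPdf
  have hC : 0 < (2 * Real.pi * σ ^ 2) ^ (-(d:ℝ)/2) := by positivity
  rw [show a * ((2 * Real.pi * σ ^ 2) ^ (-(d:ℝ)/2) * Real.exp (-‖x - m₁‖ ^ 2 / (2 * σ ^ 2)))
      = (2 * Real.pi * σ ^ 2) ^ (-(d:ℝ)/2) * (a * Real.exp (-‖x - m₁‖ ^ 2 / (2 * σ ^ 2)))
      by ring,
    mul_le_mul_iff_right₀ hC]
  conv_lhs => rw [← Real.exp_log ha]
  rw [← Real.exp_add, Real.exp_le_exp]

lemma condA {σ q : ℝ} (hσ : 0 < σ) (hq : 0 < q) (μv x : EuclideanSpace ℝ (Fin d)) :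
    q * gaussPdf d (-μv) σ x ≤ gaussPdf d μv σ x ↔
      σ ^ 2 * Real.log q / 2 ≤ ⟪x, μv⟫ := by
  rw [gaussPdf_le_iff hσ hq]
  have h1 : ‖x - -μv‖ ^ 2 = ‖x‖ ^ 2 + 2 * ⟪x, μv⟫ + ‖μv‖ ^ 2 := by
    rw [sub_neg_eq_add]
    exact norm_add_sq_real x μv
  have h2 : ‖x - μv‖ ^ 2 = ‖x‖ ^ 2 - 2 * ⟪x, μv⟫ + ‖μv‖ ^ 2 := norm_sub_sq_real x μv
  rw [h1, h2]
  have h2σ : (0:ℝ) < 2 * σ ^ 2 := by positivity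
  rw [add_comm, ← le_sub_iff_add_le, ← sub_nonneg,
    show -(‖x‖ ^ 2 - 2 * ⟪x, μv⟫ + ‖μv‖ ^ 2) / (2 * σ ^ 2) - Real.log q
        - -(‖x‖ ^ 2 + 2 * ⟪x, μv⟫ + ‖μv‖ ^ 2) / (2 * σ ^ 2)
      = (4 * ⟪x, μv⟫ - Real.log q * (2 * σ ^ 2)) / (2 * σ ^ 2) from by field_simp; ring,
    le_div_iff₀ h2σ, zero_mul, sub_nonneg]
  constructor <;> intro h <;> nlinarith [h]

lemma condB {σ q : ℝ} (hσ : 0 < σ) (hq : 0 < 1 - q) (μv x : EuclideanSpace ℝ (Fin d)) :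
    (1 - q) * gaussPdf d ((3:ℝ) • μv) σ x ≤ gaussPdf d μv σ x ↔
      ⟪x, μv⟫ ≤ 2 * ‖μv‖ ^ 2 - σ ^ 2 * Real.log (1 - q) / 2 := by
  rw [gaussPdf_le_iff hσ hq]
  have h1 : ‖x - (3:ℝ) • μv‖ ^ 2 = ‖x‖ ^ 2 - 6 * ⟪x, μv⟫ + 9 * ‖μv‖ ^ 2 := by
    rw [norm_sub_sq_real, real_inner_smul_right, norm_smul]
    simp [Real.norm_eq_abs]
    ring
  have h2 : ‖x - μv‖ ^ 2 = ‖x‖ ^ 2 - 2 * ⟪x, μv⟫ + ‖μv‖ ^ 2 := norm_sub_sq_real x μv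
  rw [h1, h2]
  have h2σ : (0:ℝ) < 2 * σ ^ 2 := by positivity
  rw [add_comm, ← le_sub_iff_add_le, ← sub_nonneg,
    show -(‖x‖ ^ 2 - 2 * ⟪x, μv⟫ + ‖μv‖ ^ 2) / (2 * σ ^ 2) - Real.log (1 - q)
        - -(‖x‖ ^ 2 - 6 * ⟪x, μv⟫ + 9 * ‖μv‖ ^ 2) / (2 * σ ^ 2)
      = (8 * ‖μv‖ ^ 2 - 4 * ⟪x, μv⟫ - Real.log (1 - q) * (2 * σ ^ 2)) / (2 * σ ^ 2)
      from by field_simp; ring,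
    le_div_iff₀ h2σ, zero_mul, sub_nonneg]
  constructor <;> intro h <;> nlinarith [h]
end Ddim


/-- Error bound for the ideal MDA classifier built with mixture weight
`q = 1 − 1/t` but evaluated on the distribution `D_p` (training on the
shortened-tail distribution, testing on the original one). -/
theorem mda_error_train_q_test_p (d : ℕ) (hd : 1 ≤ d)
    (μv : EuclideanSpace ℝ (Fin d)) (hμ : μv ≠ 0) (σ p t q : ℝ) (hσ : 0 < σ)
    (hp1 : 1 / 2 < p) (hp2 : p < 1) (ht : 2 < t) (hq : q = 1 - 1 / t) :
    2 * ((Dmix d μv σ p) {z | hMDA d μv σ q z.1 ≠ z.2}).toReal ≤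
      stdNormCDF (-(‖μv‖ / σ) + Real.log (1 - 1 / t) / (2 * (‖μv‖ / σ)))
        + stdNormCDF (-(‖μv‖ / σ) - Real.log t / (2 * (‖μv‖ / σ)))
        + p * stdNormCDF (-(‖μv‖ / σ) - Real.log (1 - 1 / t) / (2 * (‖μv‖ / σ)))
        + (1 - p) * stdNormCDF (-(‖μv‖ / σ) + Real.log t / (2 * (‖μv‖ / σ))) := by
  have hd0 : 0 < d := hd
  have hN : (0:ℝ) < ‖μv‖ := norm_pos_iff.mpr hμ
  have ht0 : (0:ℝ) < t := by linarith
  have h1mq : 1 - q = 1 / t := by rw [hq]; ring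
  have hq1 : 0 < q := by
    rw [hq]
    have : 1 / t < 1 / 2 := by
      rw [div_lt_div_iff₀ ht0 (by norm_num)]
      linarith
    linarith
  have hq2 : 0 < 1 - q := by
    rw [h1mq]; positivity
  have hlogq : Real.log q = Real.log (1 - 1 / t) := by rw [hq]
  have hlog1mq : Real.log (1 - q) = -Real.log t := by
    rw [h1mq, one_div, Real.log_inv]
  set cA := σ ^ 2 * Real.log q / 2 with hcA
  set cB := 2 * ‖μv‖ ^ 2 - σ ^ 2 * Real.log (1 - q) / 2 with hcB
  -- measurability
  have hcontm : ∀ m : EuclideanSpace ℝ (Fin d), Continuous (gaussPdf d m σ) := by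
    intro m
    unfold gaussPdf
    exact continuous_const.mul
      (Real.continuous_exp.comp
        (((((continuous_id.sub continuous_const).norm.pow 2).neg).div_const _)))
  have hCset : MeasurableSet {x : EuclideanSpace ℝ (Fin d) |
      q * gaussPdf d (-μv) σ x ≤ gaussPdf d μv σ x ∧
      (1 - q) * gaussPdf d ((3:ℝ) • μv) σ x ≤ gaussPdf d μv σ x} := by
    refine MeasurableSet.inter ?_ ?_
    · exact measurableSet_le ((hcontm _).measurable.const_mul _) (hcontm _).measurable
    · exact measurableSet_le ((hcontm _).measurable.const_mul _) (hcontm _).measurable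
  have hmda : Measurable (hMDA d μv σ q) := by
    have : Measurable fun x : EuclideanSpace ℝ (Fin d) =>
        (if q * gaussPdf d (-μv) σ x ≤ gaussPdf d μv σ x ∧
          (1 - q) * gaussPdf d ((3:ℝ) • μv) σ x ≤ gaussPdf d μv σ x then (1:ℝ) else -1) :=
      Measurable.ite hCset measurable_const measurable_const
    exact this
  have hS : MeasurableSet {z : EuclideanSpace ℝ (Fin d) × ℝ | hMDA d μv σ q z.1 ≠ z.2} :=
    (measurableSet_eq_fun (hmda.comp measurable_fst) measurable_snd).compl
  -- decomposition of the error measure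
  have hmap1 : Measurable fun x : EuclideanSpace ℝ (Fin d) => (x, (1:ℝ)) :=
    measurable_id.prodMk measurable_const
  have hmap2 : Measurable fun x : EuclideanSpace ℝ (Fin d) => (x, (-1:ℝ)) :=
    measurable_id.prodMk measurable_const
  have hDS : (Dmix d μv σ p) {z | hMDA d μv σ q z.1 ≠ z.2}
      = ENNReal.ofReal (1 / 2) * gauss d μv σ {x | hMDA d μv σ q x ≠ (1:ℝ)}
        + ENNReal.ofReal (p / 2) * gauss d (-μv) σ {x | hMDA d μv σ q x ≠ (-1:ℝ)}
        + ENNReal.ofReal ((1 - p) / 2)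
            * gauss d ((3:ℝ) • μv) σ {x | hMDA d μv σ q x ≠ (-1:ℝ)} := by
    rw [Dmix, Measure.add_apply, Measure.add_apply, Measure.smul_apply, Measure.smul_apply,
      Measure.smul_apply, Measure.map_apply hmap1 hS, Measure.map_apply hmap2 hS,
      Measure.map_apply hmap2 hS]
    rfl
  -- pointwise set inclusions
  have hsub1 : {x : EuclideanSpace ℝ (Fin d) | hMDA d μv σ q x ≠ (1:ℝ)}
      ⊆ {x | ⟪x, μv⟫ ≤ cA} ∪ {x | cB ≤ ⟪x, μv⟫} := by
    intro x hx
    by_cases hcond : q * gaussPdf d (-μv) σ x ≤ gaussPdf d μv σ x ∧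
        (1 - q) * gaussPdf d ((3:ℝ) • μv) σ x ≤ gaussPdf d μv σ x
    · exact absurd (if_pos hcond) hx
    · rcases not_and_or.mp hcond with h | h
      · left
        have := (not_iff_not.mpr (condA hσ hq1 μv x)).mp h
        exact le_of_lt (lt_of_not_ge this)
      · right
        have := (not_iff_not.mpr (condB hσ hq2 μv x)).mp h
        exact le_of_lt (lt_of_not_ge this)
  have hsub2 : {x : EuclideanSpace ℝ (Fin d) | hMDA d μv σ q x ≠ (-1:ℝ)}
      ⊆ {x | cA ≤ ⟪x, μv⟫} := by
    intro x hx
    by_cases hcond : q * gaussPdf d (-μv) σ x ≤ gaussPdf d μv σ x ∧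
        (1 - q) * gaussPdf d ((3:ℝ) • μv) σ x ≤ gaussPdf d μv σ x
    · exact (condA hσ hq1 μv x).mp hcond.1
    · exact absurd (if_neg hcond) hx
  have hsub3 : {x : EuclideanSpace ℝ (Fin d) | hMDA d μv σ q x ≠ (-1:ℝ)}
      ⊆ {x | ⟪x, μv⟫ ≤ cB} := by
    intro x hx
    by_cases hcond : q * gaussPdf d (-μv) σ x ≤ gaussPdf d μv σ x ∧
        (1 - q) * gaussPdf d ((3:ℝ) • μv) σ x ≤ gaussPdf d μv σ x
    · exact (condB hσ hq2 μv x).mp hcond.2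
    · exact absurd (if_neg hcond) hx
  -- the four CDF values
  set ν := ‖μv‖ / σ with hν
  set Φ₁ := stdNormCDF (-ν + Real.log (1 - 1 / t) / (2 * ν)) with hΦ₁
  set Φ₂ := stdNormCDF (-ν - Real.log t / (2 * ν)) with hΦ₂
  set Φ₃ := stdNormCDF (-ν - Real.log (1 - 1 / t) / (2 * ν)) with hΦ₃
  set Φ₄ := stdNormCDF (-ν + Real.log t / (2 * ν)) with hΦ₄
  have hg1a : gauss d μv σ {x | ⟪x, μv⟫ ≤ cA} = ENNReal.ofReal Φ₁ := by
    rw [gauss_halfspace_le hd0 μv hσ hμ cA, hΦ₁]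
    congr 2
    rw [real_inner_self_eq_norm_sq, hcA, hν, ← hlogq]
    field_simp
    ring
  have hg1b : gauss d μv σ {x | cB ≤ ⟪x, μv⟫} = ENNReal.ofReal Φ₂ := by
    rw [gauss_halfspace_ge hd0 μv hσ hμ cB, hΦ₂]
    congr 2
    rw [real_inner_self_eq_norm_sq, hcB, hν, hlog1mq]
    field_simp
    ring
  have hg2 : gauss d (-μv) σ {x | cA ≤ ⟪x, μv⟫} = ENNReal.ofReal Φ₃ := by
    rw [gauss_halfspace_ge hd0 (-μv) hσ hμ cA, hΦ₃]
    congr 2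
    rw [inner_neg_left, real_inner_self_eq_norm_sq, hcA, hν, ← hlogq]
    field_simp
  have hg3 : gauss d ((3:ℝ) • μv) σ {x | ⟪x, μv⟫ ≤ cB} = ENNReal.ofReal Φ₄ := by
    rw [gauss_halfspace_le hd0 ((3:ℝ) • μv) hσ hμ cB, hΦ₄]
    congr 2
    rw [real_inner_smul_left, real_inner_self_eq_norm_sq, hcB, hν, hlog1mq]
    field_simp
    ring
  -- measure bounds
  have hb1 : gauss d μv σ {x | hMDA d μv σ q x ≠ (1:ℝ)}
      ≤ ENNReal.ofReal Φ₁ + ENNReal.ofReal Φ₂ := by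
    calc gauss d μv σ {x | hMDA d μv σ q x ≠ (1:ℝ)}
        ≤ gauss d μv σ ({x | ⟪x, μv⟫ ≤ cA} ∪ {x | cB ≤ ⟪x, μv⟫}) := measure_mono hsub1
      _ ≤ gauss d μv σ {x | ⟪x, μv⟫ ≤ cA} + gauss d μv σ {x | cB ≤ ⟪x, μv⟫} :=
          measure_union_le _ _
      _ = ENNReal.ofReal Φ₁ + ENNReal.ofReal Φ₂ := by rw [hg1a, hg1b]
  have hb2 : gauss d (-μv) σ {x | hMDA d μv σ q x ≠ (-1:ℝ)} ≤ ENNReal.ofReal Φ₃ := by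
    calc gauss d (-μv) σ {x | hMDA d μv σ q x ≠ (-1:ℝ)}
        ≤ gauss d (-μv) σ {x | cA ≤ ⟪x, μv⟫} := measure_mono hsub2
      _ = ENNReal.ofReal Φ₃ := hg2
  have hb3 : gauss d ((3:ℝ) • μv) σ {x | hMDA d μv σ q x ≠ (-1:ℝ)}
      ≤ ENNReal.ofReal Φ₄ := by
    calc gauss d ((3:ℝ) • μv) σ {x | hMDA d μv σ q x ≠ (-1:ℝ)}
        ≤ gauss d ((3:ℝ) • μv) σ {x | ⟪x, μv⟫ ≤ cB} := measure_mono hsub3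
      _ = ENNReal.ofReal Φ₄ := hg3
  have hΦ₁0 := stdNormCDF_nonneg (-ν + Real.log (1 - 1 / t) / (2 * ν))
  have hΦ₂0 := stdNormCDF_nonneg (-ν - Real.log t / (2 * ν))
  have hΦ₃0 := stdNormCDF_nonneg (-ν - Real.log (1 - 1 / t) / (2 * ν))
  have hΦ₄0 := stdNormCDF_nonneg (-ν + Real.log t / (2 * ν))
  rw [← hΦ₁] at hΦ₁0; rw [← hΦ₂] at hΦ₂0; rw [← hΦ₃] at hΦ₃0; rw [← hΦ₄] at hΦ₄0
  have hp0 : (0:ℝ) ≤ p := by linarith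
  have hp1' : (0:ℝ) ≤ 1 - p := by linarith
  have hbound : (Dmix d μv σ p) {z | hMDA d μv σ q z.1 ≠ z.2}
      ≤ ENNReal.ofReal ((Φ₁ + Φ₂ + p * Φ₃ + (1 - p) * Φ₄) / 2) := by
    rw [hDS]
    have step1 : ENNReal.ofReal (1 / 2) * gauss d μv σ {x | hMDA d μv σ q x ≠ (1:ℝ)}
          + ENNReal.ofReal (p / 2) * gauss d (-μv) σ {x | hMDA d μv σ q x ≠ (-1:ℝ)}
          + ENNReal.ofReal ((1 - p) / 2)
              * gauss d ((3:ℝ) • μv) σ {x | hMDA d μv σ q x ≠ (-1:ℝ)}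
        ≤ ENNReal.ofReal (1 / 2) * (ENNReal.ofReal Φ₁ + ENNReal.ofReal Φ₂)
          + ENNReal.ofReal (p / 2) * ENNReal.ofReal Φ₃
          + ENNReal.ofReal ((1 - p) / 2) * ENNReal.ofReal Φ₄ := by
      gcongr
    refine le_trans step1 (le_of_eq ?_)
    rw [← ENNReal.ofReal_add hΦ₁0 hΦ₂0,
      ← ENNReal.ofReal_mul (by norm_num : (0:ℝ) ≤ 1 / 2),
      ← ENNReal.ofReal_mul (by positivity : (0:ℝ) ≤ p / 2),
      ← ENNReal.ofReal_mul (by positivity : (0:ℝ) ≤ (1 - p) / 2),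
      ← ENNReal.ofReal_add (by positivity) (by positivity),
      ← ENNReal.ofReal_add (by positivity) (by positivity)]
    congr 1
    ring
  have hfin : ((Dmix d μv σ p) {z | hMDA d μv σ q z.1 ≠ z.2}).toReal
      ≤ (Φ₁ + Φ₂ + p * Φ₃ + (1 - p) * Φ₄) / 2 :=
    ENNReal.toReal_le_of_le_ofReal (by positivity) hbound
  linarith
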